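/- arXiv:1411.6148 — 4 statements merged into one kernel-verified Lean document; each statement's English description precedes it below -/
import Mathlib

section
/- Let n' ≥ 1 be an integer, let β, σ, c₁ > 0, let 0 < ε ≤ 1, and set γ = (e^ε − 1)/(e^ε + 1). Let f be a probability density function on ℝ satisfying sup_{x∈ℝ} |f(x) − φ(x)| ≤ c₁/√n', where φ is the standard normal density. Suppose w ∈ ℝ satisfies |w| + 4β/(σ√n') ≤ √(2·ln(γ√n'/(c₁√(2π)))). Then for all a, b ∈ ℝ with |a| ≤ 4β/σ and |b| ≤ 4β/σ: f(w − a/√n') ≤ exp(ε + (8β/(σ√n'))·√(2·ln(γ√n'/(c₁√(2π))))) · f(w − b/√n'). -/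
noncomputable section

/-- The density of the standard normal distribution. -/
def stdNormalPDF (x : ℝ) : ℝ := (1 / Real.sqrt (2 * Real.pi)) * Real.exp (-x ^ 2 / 2)

/-- a smoothness estimate for densities that are uniformly close to the standard
normal density.  If `f` is a probability density with `sup_x |f(x) - φ(x)| ≤ c₁/√n'`, and `w`
satisfies `|w| + 4β/(σ√n') ≤ √(2 ln(γ√n'/(c₁√(2π))))` where `γ = (e^ε-1)/(e^ε+1)`, then for all
`a, b` with `|a|, |b| ≤ 4β/σ`:
`f(w - a/√n') ≤ exp(ε + (8β/(σ√n'))·√(2 ln(γ√n'/(c₁√(2π))))) · f(w - b/√n')`. -/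
theorem near_gaussian_density_smooth
    (n' : ℕ) (hn' : 1 ≤ n') (β σ c₁ ε γ : ℝ)
    (hβ : 0 < β) (hσ : 0 < σ) (hc₁ : 0 < c₁) (hε : 0 < ε) (hε1 : ε ≤ 1)
    (hγ : γ = (Real.exp ε - 1) / (Real.exp ε + 1))
    (f : ℝ → ℝ) (hf0 : ∀ x, 0 ≤ f x) (hf1 : (∫ x, f x) = 1)
    (hsup : ∀ x : ℝ, |f x - stdNormalPDF x| ≤ c₁ / Real.sqrt n')
    (w : ℝ)
    (hw : |w| + 4 * β / (σ * Real.sqrt n') ≤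
        Real.sqrt (2 * Real.log (γ * Real.sqrt n' / (c₁ * Real.sqrt (2 * Real.pi)))))
    (a b : ℝ) (ha : |a| ≤ 4 * β / σ) (hb : |b| ≤ 4 * β / σ) :
    f (w - a / Real.sqrt n') ≤
      Real.exp (ε + (8 * β / (σ * Real.sqrt n')) *
            Real.sqrt (2 * Real.log (γ * Real.sqrt n' / (c₁ * Real.sqrt (2 * Real.pi))))) *
        f (w - b / Real.sqrt n') := by
  have h2pi : 0 < Real.sqrt (2 * Real.pi) := Real.sqrt_pos.mpr (by positivity)
  have hsn : (1:ℝ) ≤ Real.sqrt n' := by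
    have h1 : (1:ℝ) ≤ (n' : ℝ) := by exact_mod_cast hn'
    simpa using Real.sqrt_le_sqrt h1
  have hsn0 : (0:ℝ) < Real.sqrt n' := lt_of_lt_of_le one_pos hsn
  set sn := Real.sqrt n' with hsndef
  set L := Real.log (γ * sn / (c₁ * Real.sqrt (2 * Real.pi))) with hLdef
  set T := Real.sqrt (2 * L) with hTdef
  set δ := 4 * β / (σ * sn) with hδdef
  have hδ0 : 0 < δ := by positivity
  have hwT : |w| + δ ≤ T := hw
  have hT0 : 0 < T := lt_of_lt_of_le (by positivity) hwT
  have hL0 : 0 < L := by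
    have := Real.sqrt_pos.mp hT0; linarith
  have hexp1 : 1 < Real.exp ε := by
    calc (1:ℝ) = Real.exp 0 := by simp
    _ < Real.exp ε := Real.exp_lt_exp.mpr hε
  have hγ0 : 0 < γ := by
    rw [hγ]; apply div_pos <;> linarith
  have hγ1 : γ < 1 := by
    rw [hγ, div_lt_one (by linarith)]; linarith
  have hX0 : 0 < γ * sn / (c₁ * Real.sqrt (2 * Real.pi)) :=
    div_pos (mul_pos hγ0 hsn0) (mul_pos hc₁ h2pi)
  have hT2 : T ^ 2 = 2 * L := Real.sq_sqrt (by linarith)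
  have hphiT : stdNormalPDF T = c₁ / (γ * sn) := by
    unfold stdNormalPDF
    rw [hT2, show -(2 * L) / 2 = -L by ring, Real.exp_neg, hLdef, Real.exp_log hX0]
    field_simp
  have hkey : c₁ / sn = γ * stdNormalPDF T := by
    rw [hphiT]; field_simp
  have hmono : ∀ x : ℝ, |x| ≤ T → stdNormalPDF T ≤ stdNormalPDF x := by
    intro x hx
    unfold stdNormalPDF
    have hx2 : x ^ 2 ≤ T ^ 2 := by
      calc x ^ 2 = |x| ^ 2 := (sq_abs x).symm
      _ ≤ T ^ 2 := pow_le_pow_left₀ (abs_nonneg x) hx 2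
    have hexp : Real.exp (-T ^ 2 / 2) ≤ Real.exp (-x ^ 2 / 2) :=
      Real.exp_le_exp.mpr (by linarith)
    exact mul_le_mul_of_nonneg_left hexp (by positivity)
  clear_value T L
  set xa := w - a / sn with hxadef
  set xb := w - b / sn with hxbdef
  clear_value xa xb δ
  have habs : ∀ c : ℝ, |c| ≤ 4 * β / σ → |w - c / sn| ≤ T := by
    intro c hc
    have h1 : |w - c / sn| ≤ |w| + |c / sn| := by
      have := abs_add_le w (-(c / sn)); simpa [sub_eq_add_neg] using this
    have h2 : |c / sn| ≤ δ := by
      rw [abs_div, abs_of_pos hsn0, hδdef]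
      rw [div_le_div_iff₀ hsn0 (by positivity)]
      calc |c| * (σ * sn) = (|c| * σ) * sn := by ring
      _ ≤ (4 * β / σ * σ) * sn := by
          have : |c| * σ ≤ 4 * β / σ * σ := mul_le_mul_of_nonneg_right hc hσ.le
          exact mul_le_mul_of_nonneg_right this hsn0.le
      _ = 4 * β * sn := by field_simp
    linarith
  have hxa : |xa| ≤ T := hxadef ▸ habs a ha
  have hadd : 4 * β / σ + 4 * β / σ = 8 * β / σ := by ring
  have hxb : |xb| ≤ T := hxbdef ▸ habs b hb
  have h1 : |xb - xa| ≤ 2 * δ := by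
    have heq : xb - xa = (a - b) / sn := by rw [hxadef, hxbdef]; ring
    have h2δ : 2 * δ * sn = 8 * β / σ := by rw [hδdef]; field_simp; ring
    have habsub : |a - b| ≤ |a| + |b| := abs_sub _ _
    rw [heq, abs_div, abs_of_pos hsn0, div_le_iff₀ hsn0, h2δ]
    linarith
  have h2 : |xb + xa| ≤ 2 * T := by
    have := abs_add_le xb xa; linarith
  have hdiff : xb ^ 2 - xa ^ 2 ≤ 4 * δ * T := by
    calc xb ^ 2 - xa ^ 2 = (xb - xa) * (xb + xa) := by ring
    _ ≤ |(xb - xa) * (xb + xa)| := le_abs_self _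
    _ = |xb - xa| * |xb + xa| := abs_mul _ _
    _ ≤ (2 * δ) * (2 * T) := mul_le_mul h1 h2 (abs_nonneg _) (by linarith)
    _ = 4 * δ * T := by ring
  have hratio : stdNormalPDF xa ≤ Real.exp (2 * δ * T) * stdNormalPDF xb := by
    unfold stdNormalPDF
    rw [show Real.exp (2 * δ * T) * (1 / Real.sqrt (2 * Real.pi) * Real.exp (-xb ^ 2 / 2))
        = 1 / Real.sqrt (2 * Real.pi) * Real.exp (2 * δ * T + -xb ^ 2 / 2) by
      rw [Real.exp_add]; ring]
    exact mul_le_mul_of_nonneg_left (Real.exp_le_exp.mpr (by nlinarith)) (by positivity)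
  have hma := hmono xa hxa
  have hmb := hmono xb hxb
  have hsa := abs_le.mp (hsup xa)
  have hsb := abs_le.mp (hsup xb)
  have hfa : f xa ≤ (1 + γ) * stdNormalPDF xa := by
    have h3 : γ * stdNormalPDF T ≤ γ * stdNormalPDF xa :=
      mul_le_mul_of_nonneg_left hma hγ0.le
    linarith [hsa.2]
  have hfb : (1 - γ) * stdNormalPDF xb ≤ f xb := by
    have h3 : γ * stdNormalPDF T ≤ γ * stdNormalPDF xb :=
      mul_le_mul_of_nonneg_left hmb hγ0.le
    linarith [hsb.1]
  have hφb0 : 0 ≤ stdNormalPDF xb := by unfold stdNormalPDF; positivity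
  have hγeq : 1 + γ = Real.exp ε * (1 - γ) := by
    rw [hγ]
    have h : Real.exp ε + 1 ≠ 0 := by positivity
    field_simp
    ring
  have h8 : 8 * β / (σ * sn) = 2 * δ := by rw [hδdef]; ring
  calc f xa ≤ (1 + γ) * stdNormalPDF xa := hfa
  _ ≤ (1 + γ) * (Real.exp (2 * δ * T) * stdNormalPDF xb) :=
      mul_le_mul_of_nonneg_left hratio (by linarith)
  _ = Real.exp (ε + 2 * δ * T) * ((1 - γ) * stdNormalPDF xb) := by
      rw [hγeq, Real.exp_add]; ring
  _ ≤ Real.exp (ε + 2 * δ * T) * f xb :=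
      mul_le_mul_of_nonneg_left hfb (Real.exp_pos _).le
  _ = Real.exp (ε + (8 * β / (σ * sn)) * T) * f xb := by rw [h8]
end
end

section
/- Let n' ≥ 1 be an integer, let β, σ, c₁, C > 0, let 0 < ε ≤ 1, and set γ = (e^ε − 1)/(e^ε + 1). Let V be a real-valued random variable whose cumulative distribution function F satisfies sup_{x∈ℝ} |F(x) − Φ(x)| ≤ C/√n', where Φ is the standard normal cdf. Let x₀ = √(2·ln(γ√n'/(c₁√(2π)))) − 4β/(σ√n') and suppose x₀ − 4β/(σ√n') > 0. Then for every a ∈ ℝ with |a| ≤ 4β/σ: Pr[|a/√n' + V| > x₀] ≤ √(2/π)·(1/(x₀ − 4β/(σ√n')))·exp(−(x₀ − 4β/(σ√n'))²/2) + 2C/√n'. -/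
open MeasureTheory

noncomputable section

/-- The cumulative distribution function of the standard normal distribution. -/
def stdNormalCDF (x : ℝ) : ℝ := ((ProbabilityTheory.gaussianReal 0 1) (Set.Iic x)).toReal

lemma aux_integral_Ioi (t : ℝ) :
    ∫ x in Set.Ioi t, x * Real.exp (-x ^ 2 / 2) = Real.exp (-t ^ 2 / 2) := by
  have key : ∫ x in Set.Ioi t, x * Real.exp (-x ^ 2 / 2) = 0 - -Real.exp (-t ^ 2 / 2) := by
    refine MeasureTheory.integral_Ioi_of_hasDerivAt_of_tendsto'
      (f := fun x => -Real.exp (-x ^ 2 / 2)) (fun x _ => ?_) ?_ ?_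
    · have hg : HasDerivAt (fun x : ℝ => -x ^ 2 / 2) (-x) x := by
        have := ((hasDerivAt_pow 2 x).neg).div_const 2
        refine this.congr_deriv ?_
        simp; ring
      have := hg.exp.neg
      refine this.congr_deriv ?_
      ring
    · have h1 : IntegrableOn (fun x : ℝ => x * Real.exp (-(1/2) * x ^ 2)) (Set.Ioi t) :=
        (integrable_mul_exp_neg_mul_sq (by norm_num : (0:ℝ) < 1/2)).integrableOn
      convert h1 using 2 with x
      ring_nf
    · have h : Filter.Tendsto (fun x : ℝ => -x ^ 2 / 2) Filter.atTop Filter.atBot := by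
        apply Filter.Tendsto.atBot_div_const two_pos
        exact Filter.tendsto_neg_atBot_iff.2 (Filter.tendsto_pow_atTop two_ne_zero)
      have := (Real.tendsto_exp_atBot.comp h).neg
      simpa using this
  linarith [key]

lemma aux_mills (t : ℝ) (ht : 0 < t) :
    ∫ x in Set.Ioi t, Real.exp (-x ^ 2 / 2) ≤ (1 / t) * Real.exp (-t ^ 2 / 2) := by
  have hint1 : IntegrableOn (fun x : ℝ => Real.exp (-x ^ 2 / 2)) (Set.Ioi t) := by
    have := (integrable_exp_neg_mul_sq (by norm_num : (0:ℝ) < 1/2)).integrableOn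
      (s := Set.Ioi t)
    convert this using 2 with x
    ring_nf
  have hint2 : IntegrableOn (fun x : ℝ => x * Real.exp (-x ^ 2 / 2)) (Set.Ioi t) := by
    have := (integrable_mul_exp_neg_mul_sq (by norm_num : (0:ℝ) < 1/2)).integrableOn
      (s := Set.Ioi t)
    convert this using 2 with x
    ring_nf
  have h1 : ∫ x in Set.Ioi t, Real.exp (-x ^ 2 / 2) ≤
      ∫ x in Set.Ioi t, (1 / t) * (x * Real.exp (-x ^ 2 / 2)) := by
    refine setIntegral_mono_on hint1 (hint2.const_mul _) measurableSet_Ioi fun x hx => ?_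
    have hx' : t < x := hx
    have h1x : 1 ≤ x / t := (one_le_div ht).2 hx'.le
    have := Real.exp_pos (-x ^ 2 / 2)
    calc Real.exp (-x ^ 2 / 2) = 1 * Real.exp (-x ^ 2 / 2) := by ring
      _ ≤ (x / t) * Real.exp (-x ^ 2 / 2) := by nlinarith
      _ = (1 / t) * (x * Real.exp (-x ^ 2 / 2)) := by ring
  rw [integral_const_mul, aux_integral_Ioi] at h1
  exact h1

lemma stdNormalCDF_singleton_zero (t : ℝ) :
    (ProbabilityTheory.gaussianReal 0 1) {t} = 0 :=
  ProbabilityTheory.gaussianReal_absolutelyContinuous 0 one_ne_zero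
    (measure_singleton t)

lemma stdNormalCDF_tail (t : ℝ) :
    ((ProbabilityTheory.gaussianReal 0 1) (Set.Ioi t)).toReal = 1 - stdNormalCDF t := by
  have : Set.Ioi t = (Set.Iic t)ᶜ := by simp
  rw [this, prob_compl_eq_one_sub measurableSet_Iic]
  rw [ENNReal.toReal_sub_of_le prob_le_one (by simp)]
  simp [stdNormalCDF]

lemma stdNormalCDF_neg (t : ℝ) : stdNormalCDF (-t) = 1 - stdNormalCDF t := by
  have hmap : (ProbabilityTheory.gaussianReal 0 1).map (fun x => (-1 : ℝ) * x) =
      ProbabilityTheory.gaussianReal 0 1 := by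
    rw [show (fun x => (-1:ℝ) * x) = ((-1 : ℝ) * ·) from rfl,
      ProbabilityTheory.gaussianReal_map_const_mul (-1)]
    norm_num
  have hpre : (fun x => (-1 : ℝ) * x) ⁻¹' (Set.Iic (-t)) = Set.Ici t := by
    ext x; simp [Set.mem_Iic, Set.mem_Ici]
  have h1 : (ProbabilityTheory.gaussianReal 0 1) (Set.Iic (-t)) =
      (ProbabilityTheory.gaussianReal 0 1) (Set.Ici t) := by
    conv_lhs => rw [← hmap]
    rw [Measure.map_apply (by fun_prop) measurableSet_Iic, hpre]
  have h2 : (ProbabilityTheory.gaussianReal 0 1) (Set.Ici t) =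
      (ProbabilityTheory.gaussianReal 0 1) (Set.Ioi t) := by
    rw [← Set.Ioi_union_left]
    refine le_antisymm ((measure_union_le _ _).trans ?_) (measure_mono Set.subset_union_left)
    rw [stdNormalCDF_singleton_zero t, add_zero]
  have h3 : ((ProbabilityTheory.gaussianReal 0 1) (Set.Ioi t)).toReal = 1 - stdNormalCDF t :=
    stdNormalCDF_tail t
  rw [stdNormalCDF, h1, h2, h3]

lemma stdNormalCDF_mono : Monotone stdNormalCDF := fun a b hab =>
  ENNReal.toReal_mono (measure_ne_top _ _) (measure_mono (Set.Iic_subset_Iic.2 hab))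

lemma stdNormalCDF_tail_bound (t : ℝ) (ht : 0 < t) :
    1 - stdNormalCDF t ≤ (Real.sqrt (2 * Real.pi))⁻¹ * ((1 / t) * Real.exp (-t ^ 2 / 2)) := by
  rw [← stdNormalCDF_tail]
  rw [ProbabilityTheory.gaussianReal_apply_eq_integral 0 one_ne_zero,
    ENNReal.toReal_ofReal (setIntegral_nonneg measurableSet_Ioi fun x _ =>
      ProbabilityTheory.gaussianPDFReal_nonneg 0 1 x)]
  have hpdf : ∀ x : ℝ, ProbabilityTheory.gaussianPDFReal 0 1 x =
      (Real.sqrt (2 * Real.pi))⁻¹ * Real.exp (-x ^ 2 / 2) := by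
    intro x
    simp [ProbabilityTheory.gaussianPDFReal]
  simp_rw [hpdf]
  rw [integral_const_mul]
  have hs : (0:ℝ) ≤ (Real.sqrt (2 * Real.pi))⁻¹ := by positivity
  exact mul_le_mul_of_nonneg_left (aux_mills t ht) hs

lemma aux_sqrt_two_div_pi :
    Real.sqrt (2 / Real.pi) = 2 * (Real.sqrt (2 * Real.pi))⁻¹ := by
  have hπ : (0:ℝ) < Real.pi := Real.pi_pos
  have h2π : (0:ℝ) < Real.sqrt (2 * Real.pi) := Real.sqrt_pos.2 (by positivity)
  have hmul : Real.sqrt (2 / Real.pi) * Real.sqrt (2 * Real.pi) = 2 := by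
    rw [← Real.sqrt_mul (by positivity)]
    rw [show 2 / Real.pi * (2 * Real.pi) = 2 ^ 2 by field_simp]
    exact Real.sqrt_sq (by norm_num)
  field_simp
  nlinarith [Real.mul_self_sqrt (by norm_num : (0:ℝ) ≤ 2), Real.sqrt_nonneg Real.pi]

/-- a tail estimate for random variables whose cdf is uniformly close to the
standard normal cdf.  If `V` has distribution `μ` with cdf `F` satisfying
`sup_x |F(x) - Φ(x)| ≤ C/√n'`, `x₀ = √(2 ln(γ√n'/(c₁√(2π)))) - 4β/(σ√n')` with
`γ = (e^ε-1)/(e^ε+1)` and `x₀ - 4β/(σ√n') > 0`, then for every `a` with `|a| ≤ 4β/σ`: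
`Pr[|a/√n' + V| > x₀] ≤ √(2/π)·(1/(x₀ - 4β/(σ√n')))·exp(-(x₀ - 4β/(σ√n'))²/2) + 2C/√n'`. -/
theorem near_gaussian_tail_bound
    (n' : ℕ) (hn' : 1 ≤ n') (β σ c₁ C ε γ x₀ : ℝ)
    (hβ : 0 < β) (hσ : 0 < σ) (hc₁ : 0 < c₁) (hC : 0 < C) (hε : 0 < ε) (hε1 : ε ≤ 1)
    (hγ : γ = (Real.exp ε - 1) / (Real.exp ε + 1))
    (μ : Measure ℝ) [IsProbabilityMeasure μ]
    (hF : ∀ x : ℝ, |(μ (Set.Iic x)).toReal - stdNormalCDF x| ≤ C / Real.sqrt n')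
    (hx₀ : x₀ = Real.sqrt (2 * Real.log (γ * Real.sqrt n' / (c₁ * Real.sqrt (2 * Real.pi)))) -
        4 * β / (σ * Real.sqrt n'))
    (hx₀pos : 0 < x₀ - 4 * β / (σ * Real.sqrt n'))
    (a : ℝ) (ha : |a| ≤ 4 * β / σ) :
    (μ {x : ℝ | x₀ < |a / Real.sqrt n' + x|}).toReal ≤
      Real.sqrt (2 / Real.pi) * (1 / (x₀ - 4 * β / (σ * Real.sqrt n'))) *
          Real.exp (-(x₀ - 4 * β / (σ * Real.sqrt n')) ^ 2 / 2) +
        2 * C / Real.sqrt n' := by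
  have hn0 : (0:ℝ) < (n' : ℝ) := by exact_mod_cast hn'
  have hn : (0:ℝ) < Real.sqrt n' := Real.sqrt_pos.2 hn0
  set s := a / Real.sqrt n' with hs
  set t := x₀ - 4 * β / (σ * Real.sqrt n') with ht
  have hsb : |s| ≤ 4 * β / (σ * Real.sqrt n') := by
    rw [hs, abs_div, abs_of_pos hn]
    calc |a| / Real.sqrt n' ≤ (4 * β / σ) / Real.sqrt n' := by gcongr
      _ = 4 * β / (σ * Real.sqrt n') := by rw [div_div]
  have hsub : {x : ℝ | x₀ < |s + x|} ⊆ Set.Ioi (x₀ - s) ∪ Set.Iio (-x₀ - s) := by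
    intro x hx
    simp only [Set.mem_setOf_eq] at hx
    rcases lt_abs.1 hx with h | h
    · exact Or.inl (Set.mem_Ioi.2 (by linarith))
    · exact Or.inr (Set.mem_Iio.2 (by linarith))
  have hμE : (μ {x : ℝ | x₀ < |s + x|}).toReal ≤
      (μ (Set.Ioi (x₀ - s))).toReal + (μ (Set.Iio (-x₀ - s))).toReal := by
    rw [← ENNReal.toReal_add (measure_ne_top μ _) (measure_ne_top μ _)]
    exact ENNReal.toReal_mono
      (ENNReal.add_ne_top.2 ⟨measure_ne_top μ _, measure_ne_top μ _⟩)
      ((measure_mono hsub).trans (measure_union_le _ _))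
  have htail : ∀ y : ℝ, (μ (Set.Ioi y)).toReal = 1 - (μ (Set.Iic y)).toReal := by
    intro y
    rw [show Set.Ioi y = (Set.Iic y)ᶜ by simp, prob_compl_eq_one_sub measurableSet_Iic,
      ENNReal.toReal_sub_of_le prob_le_one (by simp)]
    simp
  have hIio : (μ (Set.Iio (-x₀ - s))).toReal ≤ (μ (Set.Iic (-x₀ - s))).toReal :=
    ENNReal.toReal_mono (measure_ne_top μ _) (measure_mono Set.Iio_subset_Iic_self)
  have hF1 := abs_le.1 (hF (x₀ - s))
  have hF2 := abs_le.1 (hF (-x₀ - s))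
  have hmono1 : stdNormalCDF t ≤ stdNormalCDF (x₀ - s) := by
    apply stdNormalCDF_mono
    have := abs_le.1 hsb
    rw [ht]; linarith [this.2]
  have hmono2 : stdNormalCDF (-x₀ - s) ≤ stdNormalCDF (-t) := by
    apply stdNormalCDF_mono
    have := abs_le.1 hsb
    rw [ht]; linarith [this.1]
  have hneg := stdNormalCDF_neg t
  have htb := stdNormalCDF_tail_bound t hx₀pos
  have hfinal : Real.sqrt (2 / Real.pi) * (1 / t) * Real.exp (-t ^ 2 / 2) =
      2 * ((Real.sqrt (2 * Real.pi))⁻¹ * ((1 / t) * Real.exp (-t ^ 2 / 2))) := by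
    rw [aux_sqrt_two_div_pi]; ring
  have hdiv : 2 * C / Real.sqrt n' = 2 * (C / Real.sqrt n') := by ring
  calc (μ {x : ℝ | x₀ < |s + x|}).toReal
      ≤ (μ (Set.Ioi (x₀ - s))).toReal + (μ (Set.Iio (-x₀ - s))).toReal := hμE
    _ ≤ (1 - (μ (Set.Iic (x₀ - s))).toReal) + (μ (Set.Iic (-x₀ - s))).toReal := by
        rw [htail]; linarith
    _ ≤ (1 - (stdNormalCDF (x₀ - s) - C / Real.sqrt n')) +
        (stdNormalCDF (-x₀ - s) + C / Real.sqrt n') := by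
        linarith [hF1.1, hF2.2]
    _ ≤ (1 - stdNormalCDF t) + (1 - stdNormalCDF t) + 2 * C / Real.sqrt n' := by
        rw [hdiv]; linarith [hmono1, hmono2, hneg]
    _ ≤ Real.sqrt (2 / Real.pi) * (1 / t) * Real.exp (-t ^ 2 / 2) + 2 * C / Real.sqrt n' := by
        rw [hfinal]; linarith
end
end

section
/- Let m ≥ 1, let α, ε > 0, and let σ₁², …, σ_m² > 0 with σ_ℓ² ≥ σ_min² > 0 for every ℓ ∈ [m]. Let f : ℝ^m → ℝ be the joint density of a random vector with independent components, the ℓ-th component distributed as N(0, σ_ℓ²). Suppose v ∈ ℝ^m satisfies |v_ℓ| ≤ ε·σ_min²/(2mα) − α for every ℓ ∈ [m], and let s, s' ∈ ℝ^m with |s_ℓ| ≤ α and |s'_ℓ| ≤ α for every ℓ ∈ [m]. Then f(v − s) ≤ e^ε · f(v − s'). -/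
noncomputable section

/-- smoothness of the joint density of independent centred normals.  Let `f` be
the joint density of a random vector with independent components, the `ℓ`-th distributed as
`N(0, σ_ℓ²)` with `σ_ℓ² ≥ σ_min² > 0`.  If `|v_ℓ| ≤ ε σ_min²/(2mα) - α` for every `ℓ`, and
`s, s'` have all entries bounded by `α` in absolute value, then `f(v - s) ≤ e^ε · f(v - s')`. -/
theorem gaussian_joint_density_smooth
    (m : ℕ) (hm : 1 ≤ m) (α ε : ℝ) (hα : 0 < α) (hε : 0 < ε)
    (σ : Fin m → ℝ) (hσ : ∀ ℓ, 0 < σ ℓ)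
    (σmin : ℝ) (hσmin : 0 < σmin) (hσ2 : ∀ ℓ, σmin ^ 2 ≤ (σ ℓ) ^ 2)
    (v s s' : Fin m → ℝ)
    (hv : ∀ ℓ, |v ℓ| ≤ ε * σmin ^ 2 / (2 * m * α) - α)
    (hs : ∀ ℓ, |s ℓ| ≤ α) (hs' : ∀ ℓ, |s' ℓ| ≤ α) :
    (∏ ℓ, (1 / (σ ℓ * Real.sqrt (2 * Real.pi))) *
        Real.exp (-(v ℓ - s ℓ) ^ 2 / (2 * (σ ℓ) ^ 2))) ≤
      Real.exp ε *
        ∏ ℓ, (1 / (σ ℓ * Real.sqrt (2 * Real.pi))) *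
          Real.exp (-(v ℓ - s' ℓ) ^ 2 / (2 * (σ ℓ) ^ 2)) := by
  have hm' : (0:ℝ) < m := by exact_mod_cast Nat.lt_of_lt_of_le Nat.zero_lt_one hm
  have hexp : Real.exp ε = ∏ _ℓ : Fin m, Real.exp (ε / m) := by
    rw [Finset.prod_const, Finset.card_univ, Fintype.card_fin, ← Real.exp_nat_mul]
    congr 1; field_simp
  rw [hexp, ← Finset.prod_mul_distrib]
  apply Finset.prod_le_prod
  · intro i _; have := hσ i; positivity
  · intro i _
    have hσi := hσ i
    have hσ2i := hσ2 i
    have hσpos : (0:ℝ) < 2 * (σ i)^2 := by positivity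
    have hv1 := abs_le.mp (hv i)
    have hs1 := abs_le.mp (hs i)
    have hs2 := abs_le.mp (hs' i)
    have hc : 0 < 2 * (m:ℝ) * α := by positivity
    have hkey : (v i - s' i)^2 - (v i - s i)^2 ≤ ε / m * (2 * (σ i)^2) := by
      have h1 : (v i - s' i)^2 - (v i - s i)^2 ≤ 4 * α * (|v i| + α) := by
        have hva : -|v i| ≤ v i := neg_abs_le _
        have hvb : v i ≤ |v i| := le_abs_self _
        nlinarith [sq_nonneg (s i - s' i), sq_nonneg (s i + s' i), abs_nonneg (v i),
          sq_nonneg (s' i), mul_nonneg (sub_nonneg.mpr hvb) (sub_nonneg.mpr hs2.1),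
          mul_nonneg (sub_nonneg.mpr hva) (sub_nonneg.mpr hs1.1)]
      have h2 : |v i| + α ≤ ε * σmin^2 / (2 * m * α) := by linarith [hv i]
      have h3 : 4 * α * (|v i| + α) ≤ 4 * α * (ε * σmin^2 / (2 * m * α)) := by
        apply mul_le_mul_of_nonneg_left h2 (by positivity)
      have h4 : 4 * α * (ε * σmin^2 / (2 * m * α)) = ε / m * (2 * σmin^2) := by
        field_simp; ring
      have h5 : ε / m * (2 * σmin^2) ≤ ε / m * (2 * (σ i)^2) := by
        apply mul_le_mul_of_nonneg_left (by linarith) (by positivity)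
      linarith
    have hle : -(v i - s i)^2 / (2*(σ i)^2) ≤ ε / m + -(v i - s' i)^2 / (2*(σ i)^2) := by
      have h : ((v i - s' i)^2 - (v i - s i)^2) / (2*(σ i)^2) ≤ ε / m := by
        rw [div_le_iff₀ hσpos]; exact hkey
      have heq : ((v i - s' i)^2 - (v i - s i)^2) / (2*(σ i)^2)
          = -(v i - s i)^2/(2*(σ i)^2) - -(v i - s' i)^2/(2*(σ i)^2) := by ring
      linarith
    calc 1 / (σ i * Real.sqrt (2 * Real.pi)) * Real.exp (-(v i - s i)^2 / (2*(σ i)^2))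
        ≤ 1 / (σ i * Real.sqrt (2 * Real.pi)) * Real.exp (ε / m + -(v i - s' i)^2 / (2*(σ i)^2)) := by
          apply mul_le_mul_of_nonneg_left (Real.exp_le_exp.mpr hle) (by positivity)
      _ = Real.exp (ε / m) * (1 / (σ i * Real.sqrt (2 * Real.pi)) * Real.exp (-(v i - s' i)^2 / (2*(σ i)^2))) := by
          rw [Real.exp_add]; ring
end
end

section
/- Let M : T^n → S be a (k,r)-persistent ε-Bayes-Nash truthful mechanism, and let P be the deterrent payment scheme with m verifications and fine d that charges player i the amount d if player i is among the m verified players and was caught lying, and 0 otherwise. If (m/n)·d ≥ r·ε, then M with P is weakly (k,r)-persistent Bayes-Nash truthful: for every I ⊆ [n] with |I| ≤ k, every announced types t'_I ∈ T^{|I|}, every coalition C ⊆ [n]\I with |C| ≤ r, every true types t_C ∈ T^{|C|}, and every announced types t'_C ∈ T^{|C|}, Σ_{i∈C} E_{t_J, X}[u_i(t_i, M(t_C, t'_I, t_J)) − P_i((t_C, t'_I, t_J), X)] ≥ Σ_{i∈C} E_{t_J, X}[u_i(t_i, M(t'_C, t'_I, t_J)) − P_i((t'_C, t'_I, t_J),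 X)], where J = [n]\(I ∪ C), t_J ∼ 𝒯^{|J|}, and X is the outcome of uniformly sampling m distinct players from [n] and recording for each sampled player whether his announced type equals his true type. -/
open MeasureTheory

noncomputable section

/-- `(k,r)`-persistent `ε`-Bayes-Nash truthfulness of a mechanism. -/
def PersistentTruthful {n : ℕ} {T S : Type*} [MeasurableSpace T] (𝒯 : Measure T)
    (M : (Fin n → T) → S) (u : Fin n → T → S → ℝ) (k r : ℕ) (ε : ℝ) : Prop :=
  ∀ (I : Finset (Fin n)), I.card ≤ k → ∀ tI : Fin n → T,
    ∀ (C : Finset (Fin n)), Disjoint C I → C.card ≤ r →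
      ∀ (tC tC' : Fin n → T), ∀ i ∈ C,
        (∫ tJ, u i (tC i) (M (fun j => if j ∈ C then tC j else if j ∈ I then tI j else tJ j))
            ∂(Measure.pi (fun _ : Fin n => 𝒯))) ≥
          (∫ tJ, u i (tC i) (M (fun j => if j ∈ C then tC' j else if j ∈ I then tI j else tJ j))
              ∂(Measure.pi (fun _ : Fin n => 𝒯))) - ε

open Classical in
/-- The expected fine paid by player `i` under the deterrent payment scheme with `mver`
verifications and fine `d`: the set of verified players is a uniformly random `mver`-element
subset of the `n` players, and player `i` pays `d` exactly when `i` is verified and is caught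
lying (`caught`). -/
def expectedFine (n mver : ℕ) (d : ℝ) (i : Fin n) (caught : Prop) : ℝ :=
  (∑ A ∈ Finset.powersetCard mver (Finset.univ : Finset (Fin n)),
      if i ∈ A ∧ caught then d else 0) /
    ((Finset.powersetCard mver (Finset.univ : Finset (Fin n))).card : ℝ)


open Classical in
lemma count_contain (n m : ℕ) (i : Fin n) (hm : 0 < m) :
    ((Finset.powersetCard m (Finset.univ : Finset (Fin n))).filter (fun A => i ∈ A)).card
      = (n - 1).choose (m - 1) := by
  have h : ((Finset.powersetCard m (Finset.univ : Finset (Fin n))).filter (fun A => i ∈ A)).card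
      = (Finset.powersetCard (m-1) ((Finset.univ : Finset (Fin n)).erase i)).card := by
    apply Finset.card_bij (fun A _ => A.erase i)
    · intro A hA
      simp only [Finset.mem_filter, Finset.mem_powersetCard] at hA
      simp only [Finset.mem_powersetCard]
      constructor
      · exact Finset.erase_subset_erase i (Finset.subset_univ A)
      · rw [Finset.card_erase_of_mem hA.2, hA.1.2]
    · intro A hA B hB hAB
      simp only [Finset.mem_filter] at hA hB
      rw [← Finset.insert_erase hA.2, ← Finset.insert_erase hB.2, hAB]
    · intro B hB
      simp only [Finset.mem_powersetCard] at hB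
      have hiB : i ∉ B := fun h => (Finset.mem_erase.1 (hB.1 h)).1 rfl
      refine ⟨insert i B, ?_, ?_⟩
      · simp only [Finset.mem_filter, Finset.mem_powersetCard]
        refine ⟨⟨Finset.subset_univ _, ?_⟩, Finset.mem_insert_self _ _⟩
        rw [Finset.card_insert_of_notMem hiB, hB.2]
        omega
      · rw [Finset.erase_insert hiB]
  rw [h, Finset.card_powersetCard, Finset.card_erase_of_mem (Finset.mem_univ i),
    Finset.card_univ, Fintype.card_fin]

lemma expectedFine_nonneg (n m : ℕ) (d : ℝ) (hd : 0 ≤ d) (i : Fin n) (caught : Prop) :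
    0 ≤ expectedFine n m d i caught := by
  classical
  unfold expectedFine
  apply div_nonneg
  · apply Finset.sum_nonneg
    intro A _
    split <;> simp [hd]
  · positivity

lemma expectedFine_false (n m : ℕ) (d : ℝ) (i : Fin n) (caught : Prop) (hc : ¬ caught) :
    expectedFine n m d i caught = 0 := by
  classical
  unfold expectedFine
  rw [Finset.sum_eq_zero, zero_div]
  intro A _
  rw [if_neg (fun h => hc h.2)]

lemma expectedFine_true (n m : ℕ) (d : ℝ) (hd : 0 ≤ d) (hm : m ≤ n) (i : Fin n)
    (caught : Prop) (hc : caught) :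
    (m : ℝ) / n * d ≤ expectedFine n m d i caught := by
  classical
  have hn : 0 < n := i.pos
  rcases Nat.eq_zero_or_pos m with hm0 | hm0
  · subst hm0
    simp only [Nat.cast_zero, zero_div, zero_mul]
    exact expectedFine_nonneg n 0 d hd i caught
  unfold expectedFine
  have hsum : (∑ A ∈ Finset.powersetCard m (Finset.univ : Finset (Fin n)),
      if i ∈ A ∧ caught then d else 0)
      = ((n - 1).choose (m - 1) : ℝ) * d := by
    have : ∀ A ∈ Finset.powersetCard m (Finset.univ : Finset (Fin n)),
        (if i ∈ A ∧ caught then d else 0) = (if i ∈ A then d else 0) := by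
      intro A _
      by_cases h : i ∈ A <;> simp [h, hc]
    rw [Finset.sum_congr rfl this, ← Finset.sum_filter, Finset.sum_const,
      count_contain n m i hm0, nsmul_eq_mul]
  rw [hsum, Finset.card_powersetCard, Finset.card_univ, Fintype.card_fin]
  have hchoose : 0 < n.choose m := Nat.choose_pos hm
  have hkey : n * (n - 1).choose (m - 1) = n.choose m * m := by
    have h1 : n - 1 + 1 = n := Nat.succ_pred_eq_of_pos hn
    have h2 : m - 1 + 1 = m := Nat.succ_pred_eq_of_pos hm0
    have := Nat.add_one_mul_choose_eq (n - 1) (m - 1)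
    rw [h1, h2] at this
    exact this
  have hkey' : (n : ℝ) * ((n - 1).choose (m - 1) : ℝ) = (n.choose m : ℝ) * m := by
    exact_mod_cast congrArg (Nat.cast : ℕ → ℝ) hkey
  apply le_of_eq
  have hc0 : ((n.choose m : ℝ)) ≠ 0 := by positivity
  have hn0 : ((n:ℝ)) ≠ 0 := by positivity
  field_simp
  nlinarith [hkey']

/-- a `(k,r)`-persistent `ε`-Bayes-Nash truthful mechanism, together with a
deterrent payment scheme with `mver` verifications and fine `d` satisfying `(mver/n)·d ≥ rε`,
is weakly `(k,r)`-persistent Bayes-Nash truthful: no coalition of at most `r` players (in the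
presence of up to `k` arbitrarily deviating players) can increase its total expected quasilinear
utility by jointly mis-reporting. -/
theorem deterrent_scheme_weakly_persistent_truthful
    {n : ℕ} {T S : Type*} [MeasurableSpace T]
    (𝒯 : Measure T) [IsProbabilityMeasure 𝒯]
    (M : (Fin n → T) → S) (u : Fin n → T → S → ℝ)
    (k r mver : ℕ) (ε d : ℝ) (hε : 0 ≤ ε) (hd : 0 ≤ d) (hmver : mver ≤ n)
    (hM : PersistentTruthful 𝒯 M u k r ε)
    (hfine : (r : ℝ) * ε ≤ ((mver : ℝ) / n) * d) :
    ∀ (I : Finset (Fin n)), I.card ≤ k → ∀ tI : Fin n → T,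
      ∀ (C : Finset (Fin n)), Disjoint C I → C.card ≤ r →
        ∀ (tC tC' : Fin n → T),
          (∑ i ∈ C,
              ((∫ tJ, u i (tC i)
                    (M (fun j => if j ∈ C then tC j else if j ∈ I then tI j else tJ j))
                  ∂(Measure.pi (fun _ : Fin n => 𝒯))) -
                expectedFine n mver d i (tC i ≠ tC i))) ≥
            ∑ i ∈ C,
              ((∫ tJ, u i (tC i)
                    (M (fun j => if j ∈ C then tC' j else if j ∈ I then tI j else tJ j))
                  ∂(Measure.pi (fun _ : Fin n => 𝒯))) -
                expectedFine n mver d i (tC' i ≠ tC i)) := by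
  intro I hI tI C hCI hC tC tC'
  by_cases hall : ∀ i ∈ C, tC' i = tC i
  · apply ge_of_eq
    apply Finset.sum_congr rfl
    intro i hi
    have hint : ∀ tJ : Fin n → T,
        (fun j => if j ∈ C then tC j else if j ∈ I then tI j else tJ j) =
        (fun j => if j ∈ C then tC' j else if j ∈ I then tI j else tJ j) := by
      intro tJ; funext j
      by_cases hj : j ∈ C
      · simp [hj, hall j hj]
      · simp [hj]
    rw [expectedFine_false n mver d i _ (by simp),
        expectedFine_false n mver d i _ (by simp [hall i hi])]
    simp only [hint]
  · push_neg at hall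
    obtain ⟨i0, hi0, hne⟩ := hall
    set μ := Measure.pi (fun _ : Fin n => 𝒯)
    -- fines on the truthful side vanish
    have hLfine : ∀ i ∈ C, expectedFine n mver d i (tC i ≠ tC i) = 0 := fun i _ =>
      expectedFine_false n mver d i _ (by simp)
    -- sum of fines on the deviating side is at least (m/n) d
    have hfines : (mver : ℝ) / n * d ≤ ∑ i ∈ C, expectedFine n mver d i (tC' i ≠ tC i) := by
      calc (mver : ℝ) / n * d ≤ expectedFine n mver d i0 (tC' i0 ≠ tC i0) :=
            expectedFine_true n mver d hd hmver i0 _ hne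
        _ ≤ ∑ i ∈ C, expectedFine n mver d i (tC' i ≠ tC i) :=
            Finset.single_le_sum (f := fun i => expectedFine n mver d i (tC' i ≠ tC i))
              (fun i _ => expectedFine_nonneg n mver d hd i _) hi0
    -- truthfulness bound
    have hint : ∀ i ∈ C,
        (∫ tJ, u i (tC i) (M (fun j => if j ∈ C then tC' j else if j ∈ I then tI j else tJ j)) ∂μ)
        ≤ (∫ tJ, u i (tC i)
            (M (fun j => if j ∈ C then tC j else if j ∈ I then tI j else tJ j)) ∂μ) + ε := by
      intro i hi
      have := hM I hI tI C hCI hC tC tC' i hi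
      linarith [this]
    have hsum : ∑ i ∈ C,
        (∫ tJ, u i (tC i) (M (fun j => if j ∈ C then tC' j else if j ∈ I then tI j else tJ j)) ∂μ)
        ≤ (∑ i ∈ C, (∫ tJ, u i (tC i)
            (M (fun j => if j ∈ C then tC j else if j ∈ I then tI j else tJ j)) ∂μ))
          + C.card * ε := by
      calc ∑ i ∈ C, (∫ tJ, u i (tC i)
            (M (fun j => if j ∈ C then tC' j else if j ∈ I then tI j else tJ j)) ∂μ)
          ≤ ∑ i ∈ C, ((∫ tJ, u i (tC i)
              (M (fun j => if j ∈ C then tC j else if j ∈ I then tI j else tJ j)) ∂μ) + ε) :=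
            Finset.sum_le_sum hint
        _ = _ := by rw [Finset.sum_add_distrib, Finset.sum_const, nsmul_eq_mul]
    have hcard : (C.card : ℝ) * ε ≤ (r : ℝ) * ε :=
      mul_le_mul_of_nonneg_right (by exact_mod_cast hC) hε
    rw [Finset.sum_sub_distrib, Finset.sum_sub_distrib]
    rw [Finset.sum_congr rfl hLfine, Finset.sum_const, smul_zero]
    linarith
end
end
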